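/- Let X be a Banach space, L_N and L generators of C^0 semigroups T_N(t), T(t) all satisfying ‖T_N(t)‖, ‖T(t)‖ ≤ Me^{ωt}. Suppose for some λ with Re λ > ω and every x ∈ X, ‖(I-λL_N)^{-1}x - (I-λL)^{-1}x‖ → 0 as N → ∞. Then for every x ∈ X and t ≥ 0, ‖T_N(t)x - T(t)x‖ → 0, uniformly on bounded t-intervals. -/

import Mathlib

open Set

/-- A `C⁰` semigroup `T(t)` on `X` with growth bound `‖T(t)‖ ≤ M e^{ωt}`,
together with its infinitesimal generator `gen`, defined on its (maximal)
domain `dom`. -/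
structure C0Semigroup (X : Type*) [NormedAddCommGroup X] [NormedSpace ℝ X]
    (M ω : ℝ) where
  T : ℝ → X →L[ℝ] X
  map_zero : T 0 = 1
  map_add : ∀ s t : ℝ, 0 ≤ s → 0 ≤ t → T (s + t) = T s ∘L T t
  strong_cont : ∀ x : X, ContinuousOn (fun t => T t x) (Ici 0)
  growth : ∀ t : ℝ, 0 ≤ t → ‖T t‖ ≤ M * Real.exp (ω * t)
  dom : Submodule ℝ X
  gen : dom →ₗ[ℝ] X
  has_gen : ∀ x : dom, HasDerivWithinAt (fun t => T t (x : X)) (gen x) (Ici 0) 0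
  dom_maximal : ∀ x y : X,
    HasDerivWithinAt (fun t => T t x) y (Ici 0) 0 → x ∈ dom

/-- `R` is the resolvent `(I - λ·gen)⁻¹` of the generator of `S`. -/
def IsResolvent {X : Type*} [NormedAddCommGroup X] [NormedSpace ℝ X]
    {M ω : ℝ} (S : C0Semigroup X M ω) (lam : ℝ) (R : X →L[ℝ] X) : Prop :=
  (∀ x : S.dom, R ((x : X) - lam • S.gen x) = (x : X)) ∧
    ∀ y : X, ∃ h : R y ∈ S.dom, R y - lam • S.gen ⟨R y, h⟩ = y

namespace TK

open Filter

variable {X : Type*} [NormedAddCommGroup X] [NormedSpace ℝ X] {M ω : ℝ}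

lemma M_nonneg (S : C0Semigroup X M ω) : 0 ≤ M := by
  have := S.growth 0 le_rfl
  have h0 : (0:ℝ) ≤ ‖S.T 0‖ := norm_nonneg _
  simpa using h0.trans this

/-- Master joint-continuity lemma. -/
lemma master (S : C0Semigroup X M ω) {α : Type*} {l : Filter α} {σ : α → ℝ} {v : α → X}
    {r : ℝ} {vL : X} (hσ : Filter.Tendsto σ l (nhds r)) (hσ0 : ∀ᶠ s in l, 0 ≤ σ s)
    (hr : 0 ≤ r) (hv : Filter.Tendsto v l (nhds vL)) :
    Filter.Tendsto (fun s => S.T (σ s) (v s)) l (nhds (S.T r vL)) := by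
  have hσ' : Filter.Tendsto σ l (nhdsWithin r (Ici 0)) :=
    tendsto_nhdsWithin_iff.2 ⟨hσ, hσ0⟩
  have h2 : Filter.Tendsto (fun s => S.T (σ s) vL) l (nhds (S.T r vL)) :=
    Filter.Tendsto.comp ((S.strong_cont vL) r hr) hσ'
  have h1 : Filter.Tendsto (fun s => S.T (σ s) (v s - vL)) l (nhds 0) := by
    have hbd : ∀ᶠ s in l, ‖S.T (σ s) (v s - vL)‖ ≤
        (M * Real.exp (|ω| * (r + 1))) * ‖v s - vL‖ := by
      have hev : ∀ᶠ s in l, σ s < r + 1 := hσ.eventually (eventually_lt_nhds (by linarith))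
      filter_upwards [hev, hσ0] with s h1 h2
      have hb : ‖S.T (σ s)‖ ≤ M * Real.exp (|ω| * (r + 1)) := by
        refine (S.growth (σ s) h2).trans ?_
        have : ω * σ s ≤ |ω| * (r + 1) := by
          calc ω * σ s ≤ |ω| * σ s := mul_le_mul_of_nonneg_right (le_abs_self ω) h2
            _ ≤ |ω| * (r + 1) := mul_le_mul_of_nonneg_left (by linarith) (abs_nonneg ω)
        exact mul_le_mul_of_nonneg_left (Real.exp_le_exp.2 this) (M_nonneg S)
      calc ‖S.T (σ s) (v s - vL)‖ ≤ ‖S.T (σ s)‖ * ‖v s - vL‖ :=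
            (S.T (σ s)).le_opNorm _
        _ ≤ (M * Real.exp (|ω| * (r + 1))) * ‖v s - vL‖ :=
            mul_le_mul_of_nonneg_right hb (norm_nonneg _)
    have hz : Filter.Tendsto (fun s => (M * Real.exp (|ω| * (r + 1))) * ‖v s - vL‖) l (nhds 0) := by
      have : Filter.Tendsto (fun s => ‖v s - vL‖) l (nhds 0) := by
        have := hv.sub_const vL
        rw [sub_self] at this
        simpa using this.norm
      simpa using this.const_mul (M * Real.exp (|ω| * (r + 1)))
    exact squeeze_zero_norm' hbd hz
  have := h1.add h2
  simp only [zero_add] at this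
  refine this.congr (fun s => ?_)
  simp [map_sub]


/-- right difference quotient at 0 tends to the generator. -/
lemma qlim (S : C0Semigroup X M ω) (x : S.dom) :
    Filter.Tendsto (fun h : ℝ => h⁻¹ • (S.T h (x : X) - (x : X)))
      (nhdsWithin 0 (Ioi 0)) (nhds (S.gen x)) := by
  have h := hasDerivWithinAt_iff_tendsto_slope.1 (S.has_gen x)
  rw [Ici_sdiff_left] at h
  refine h.congr (fun t => ?_)
  simp [slope, S.map_zero]

lemma hasDerivAt_T (S : C0Semigroup X M ω) (x : S.dom) {t : ℝ} (ht : 0 < t) :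
    HasDerivAt (fun s => S.T s (x : X)) (S.T t (S.gen x)) t := by
  rw [hasDerivAt_iff_tendsto_slope, ← nhdsLT_sup_nhdsGT t, Filter.tendsto_sup]
  constructor
  · -- from the left
    have hshift : Filter.Tendsto (fun s => t - s) (nhdsWithin t (Iio t)) (nhdsWithin 0 (Ioi 0)) := by
      refine tendsto_nhdsWithin_iff.2 ⟨?_, ?_⟩
      · have : Filter.Tendsto (fun s : ℝ => t - s) (nhds t) (nhds (t - t)) :=
          (tendsto_const_nhds.sub tendsto_id)
        simpa using this.mono_left nhdsWithin_le_nhds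
      · filter_upwards [self_mem_nhdsWithin] with s hs
        simpa using hs
    have hmain : Filter.Tendsto
        (fun s => S.T s ((t - s)⁻¹ • (S.T (t - s) (x : X) - (x : X))))
        (nhdsWithin t (Iio t)) (nhds (S.T t (S.gen x))) := by
      refine master S ?_ ?_ ht.le ((qlim S x).comp hshift)
      · exact tendsto_id.mono_left nhdsWithin_le_nhds
      · filter_upwards [Ioo_mem_nhdsLT_of_mem (show t ∈ Ioc 0 t by exact ⟨ht, le_rfl⟩)]
          with s hs
        exact hs.1.le
    refine hmain.congr' ?_
    filter_upwards [Ioo_mem_nhdsLT_of_mem (show t ∈ Ioc 0 t by exact ⟨ht, le_rfl⟩)]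
      with s hs
    have h1 : (0:ℝ) ≤ s := hs.1.le
    have h2 : (0:ℝ) ≤ t - s := by linarith [hs.2]
    have hT : S.T t (x : X) = S.T s (S.T (t - s) (x : X)) := by
      have hc := S.map_add s (t - s) h1 h2
      have h3 : s + (t - s) = t := by ring
      rw [h3] at hc
      rw [hc]; rfl
    rw [slope_def_module, map_smul, map_sub, ← hT,
      show (t - s)⁻¹ = -(s - t)⁻¹ by rw [← inv_neg, neg_sub], neg_smul, ← smul_neg, neg_sub]
  · -- from the right
    have hshift : Filter.Tendsto (fun s => s - t) (nhdsWithin t (Ioi t)) (nhdsWithin 0 (Ioi 0)) := by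
      refine tendsto_nhdsWithin_iff.2 ⟨?_, ?_⟩
      · have : Filter.Tendsto (fun s : ℝ => s - t) (nhds t) (nhds (t - t)) :=
          (tendsto_id.sub tendsto_const_nhds)
        simpa using this.mono_left nhdsWithin_le_nhds
      · filter_upwards [self_mem_nhdsWithin] with s hs
        simpa [sub_pos] using hs
    have hmain : Filter.Tendsto
        (fun s => S.T t ((s - t)⁻¹ • (S.T (s - t) (x : X) - (x : X))))
        (nhdsWithin t (Ioi t)) (nhds (S.T t (S.gen x))) :=
      ((S.T t).continuous.tendsto _).comp ((qlim S x).comp hshift)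
    refine hmain.congr' ?_
    filter_upwards [self_mem_nhdsWithin] with s hs
    have h2 : (0:ℝ) ≤ s - t := by simp at hs; linarith
    have hT : S.T s (x : X) = S.T t (S.T (s - t) (x : X)) := by
      have hc := S.map_add t (s - t) ht.le h2
      have h3 : t + (s - t) = s := by ring
      rw [h3] at hc
      rw [hc]; rfl
    rw [slope_def_module, map_smul, map_sub, ← hT]

lemma T_mem_dom (S : C0Semigroup X M ω) (x : S.dom) {s : ℝ} (hs : 0 ≤ s) :
    ∃ h : S.T s (x : X) ∈ S.dom, S.gen ⟨S.T s (x : X), h⟩ = S.T s (S.gen x) := by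
  have base : HasDerivWithinAt (fun r => S.T s (S.T r (x : X))) (S.T s (S.gen x)) (Ici 0) 0 :=
    (S.T s).hasFDerivAt.comp_hasDerivWithinAt 0 (S.has_gen x)
  have heq : ∀ r ∈ Ici (0:ℝ), S.T r (S.T s (x : X)) = S.T s (S.T r (x : X)) := by
    intro r hr
    have h1 : S.T (r + s) = S.T r ∘L S.T s := S.map_add r s hr hs
    have h2 : S.T (s + r) = S.T s ∘L S.T r := S.map_add s r hs hr
    have : S.T r ∘L S.T s = S.T s ∘L S.T r := by rw [← h1, ← h2, add_comm]
    exact DFunLike.congr_fun this (x : X)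
  have hd : HasDerivWithinAt (fun r => S.T r (S.T s (x : X))) (S.T s (S.gen x)) (Ici 0) 0 :=
    base.congr heq (heq 0 self_mem_Ici)
  have hmem : S.T s (x : X) ∈ S.dom := S.dom_maximal _ _ hd
  refine ⟨hmem, ?_⟩
  exact (uniqueDiffOn_Ici (0:ℝ) 0 self_mem_Ici).eq_deriv _ (S.has_gen ⟨S.T s (x:X), hmem⟩) hd

lemma res_comm {S : C0Semigroup X M ω} {lam : ℝ} {R : X →L[ℝ] X}
    (hR : IsResolvent S lam R) (y : X) {s : ℝ} (hs : 0 ≤ s) :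
    R (S.T s y) = S.T s (R y) := by
  obtain ⟨hmem, heq⟩ := hR.2 y
  obtain ⟨hmem2, geq⟩ := T_mem_dom S ⟨R y, hmem⟩ hs
  have h1 := hR.1 ⟨S.T s (R y), hmem2⟩
  simp only at h1
  rw [geq] at h1
  have : S.T s (R y) - lam • S.T s (S.gen ⟨R y, hmem⟩) = S.T s y := by
    rw [← map_smul, ← map_sub]
    exact congrArg (S.T s) heq
  rw [this] at h1
  exact h1


lemma hasDerivAt_T_comp (S : C0Semigroup X M ω) {t s₀ : ℝ} (h0 : 0 < s₀) (hst : s₀ < t)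
    {w : ℝ → X} {w' : X} (hw : HasDerivAt w w' s₀) {g : X} (hmem : w s₀ ∈ S.dom)
    (hg : S.gen ⟨w s₀, hmem⟩ = g) :
    HasDerivAt (fun s => S.T (t - s) (w s)) (S.T (t - s₀) w' - S.T (t - s₀) g) s₀ := by
  have hts : 0 < t - s₀ := by linarith
  -- the "frozen" part
  have hk : HasDerivAt (fun s => S.T (t - s) (w s₀)) (-(S.T (t - s₀) g)) s₀ := by
    have base : HasDerivAt (fun r => S.T r (w s₀)) (S.T (t - s₀) g) (t - s₀) := by
      have := hasDerivAt_T S ⟨w s₀, hmem⟩ hts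
      rwa [hg] at this
    have hin : HasDerivAt (fun s : ℝ => t - s) (-1 : ℝ) s₀ := by
      simpa using (hasDerivAt_id s₀).const_sub t
    have := base.scomp s₀ hin
    simpa [Function.comp_def] using this
  -- the "moving" part
  have hh : HasDerivAt (fun s => S.T (t - s) (w s - w s₀)) (S.T (t - s₀) w') s₀ := by
    rw [hasDerivAt_iff_tendsto_slope]
    have hmain : Filter.Tendsto (fun s => S.T (t - s) (slope w s₀ s))
        (nhdsWithin s₀ {s₀}ᶜ) (nhds (S.T (t - s₀) w')) := by
      refine master S ?_ ?_ hts.le (hasDerivAt_iff_tendsto_slope.1 hw)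
      · exact ((tendsto_const_nhds.sub tendsto_id).comp
          (tendsto_nhdsWithin_iff.1 (tendsto_id (x := nhdsWithin s₀ {s₀}ᶜ))).1)
      · have hc : Filter.Tendsto (fun s : ℝ => t - s) (nhdsWithin s₀ {s₀}ᶜ) (nhds (t - s₀)) :=
          (tendsto_const_nhds.sub tendsto_id).mono_left nhdsWithin_le_nhds
        exact hc.eventually (eventually_ge_nhds hts)
    refine hmain.congr (fun s => ?_)
    rw [slope_def_module, slope_def_module, map_smul, map_sub]
    congr 1
    simp
  have hsum := hh.add hk
  have hfun : (fun s => S.T (t - s) (w s - w s₀) + S.T (t - s) (w s₀))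
      = fun s => S.T (t - s) (w s) := by
    funext s; rw [map_sub]; abel
  change HasDerivAt (fun s => S.T (t - s) (w s - w s₀) + S.T (t - s) (w s₀)) _ s₀ at hsum
  rw [hfun] at hsum
  simpa [sub_eq_add_neg] using hsum

lemma unif_on_compact [CompleteSpace X] {R : ℕ → X →L[ℝ] X} {R' : X →L[ℝ] X}
    (hcons : ∀ x : X, Filter.Tendsto (fun N => R N x) Filter.atTop (nhds (R' x)))
    {K : Set X} (hK : IsCompact K) {ε : ℝ} (hε : 0 < ε) :
    ∀ᶠ N in Filter.atTop, ∀ u ∈ K, ‖R N u - R' u‖ < ε := by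
  obtain ⟨C₀, hC₀⟩ : ∃ C₀, ∀ N, ‖R N‖ ≤ C₀ := by
    apply banach_steinhaus
    intro x
    have hb : BddAbove (range fun N => ‖R N x‖) :=
      Filter.Tendsto.bddAbove_range ((hcons x).norm)
    obtain ⟨c, hc⟩ := hb
    exact ⟨c, fun N => hc (mem_range_self N)⟩
  have hC₀0 : 0 ≤ C₀ := le_trans (norm_nonneg _) (hC₀ 0)
  set D : ℝ := C₀ + ‖R'‖ + 1 with hD
  have hD1 : 1 ≤ D := by have := norm_nonneg R'; rw [hD]; linarith
  have hD0 : 0 < D := by linarith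
  set δ : ℝ := ε / D with hδdef
  have hδ : 0 < δ := div_pos hε hD0
  obtain ⟨b', hb'K, hb'fin, hcov⟩ := hK.elim_finite_subcover_image
    (b := K) (c := fun k => Metric.ball k δ) (fun k _ => Metric.isOpen_ball)
    (fun u hu => mem_biUnion hu (Metric.mem_ball_self hδ))
  have hev : ∀ᶠ N in Filter.atTop, ∀ k ∈ b', ‖R N k - R' k‖ < δ := by
    rw [Set.Finite.eventually_all hb'fin]
    intro k _
    have := (hcons k).eventually (Metric.ball_mem_nhds (R' k) hδ)
    filter_upwards [this] with N hN
    rwa [dist_eq_norm] at hN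
  filter_upwards [hev] with N hN u hu
  obtain ⟨k, hk, huk⟩ := Set.mem_iUnion₂.1 (hcov hu)
  rw [Metric.mem_ball, dist_eq_norm] at huk
  have h1 : ‖R N u - R N k‖ ≤ C₀ * δ := by
    rw [← map_sub]
    exact le_trans ((R N).le_opNorm _)
      (mul_le_mul (hC₀ N) huk.le (norm_nonneg _) hC₀0)
  have h2 : ‖R N k - R' k‖ < δ := hN k hk
  have h3 : ‖R' k - R' u‖ ≤ ‖R'‖ * δ := by
    rw [← map_sub]
    refine le_trans (R'.le_opNorm _) ?_
    have : ‖k - u‖ ≤ δ := by rw [norm_sub_rev]; exact huk.le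
    exact mul_le_mul_of_nonneg_left this (norm_nonneg _)
  have : ‖R N u - R' u‖ ≤ ‖R N u - R N k‖ + ‖R N k - R' k‖ + ‖R' k - R' u‖ := by
    have := norm_add₃_le (a := R N u - R N k) (b := R N k - R' k) (c := R' k - R' u)
    simpa using this
  have hfin : C₀ * δ + δ + ‖R'‖ * δ = ε := by
    rw [hδdef]; field_simp; ring
  linarith


lemma dom_dense [CompleteSpace X] (S : C0Semigroup X M ω) (x : X) {ε : ℝ} (hε : 0 < ε) :
    ∃ d ∈ S.dom, ‖x - d‖ < ε := by
  have contx := S.strong_cont x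
  have cwa : Filter.Tendsto (fun s => S.T s x) (nhdsWithin 0 (Ici 0)) (nhds x) := by
    have := contx 0 self_mem_Ici
    simpa [ContinuousWithinAt, S.map_zero] using this
  obtain ⟨δ, hδ0, hδ⟩ := (Metric.tendsto_nhdsWithin_nhds).1 cwa (ε/2) (by linarith)
  set h : ℝ := δ/2 with hhdef
  have hh : 0 < h := by positivity
  have hIci : ∀ a b : ℝ, 0 ≤ a → 0 ≤ b → uIcc a b ⊆ Ici 0 := by
    intro a b ha hb y hy
    rcases le_total a b with hab | hab
    · rw [uIcc_of_le hab] at hy; exact le_trans ha hy.1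
    · rw [uIcc_of_ge hab] at hy; exact le_trans hb hy.1
  have hint : ∀ a b : ℝ, 0 ≤ a → 0 ≤ b →
      IntervalIntegrable (fun s => S.T s x) MeasureTheory.volume a b := by
    intro a b ha hb
    exact (contx.mono (hIci a b ha hb)).intervalIntegrable
  set G : ℝ → X := fun u => ∫ s in (0:ℝ)..u, S.T s x with hGdef
  have haesm : MeasureTheory.AEStronglyMeasurable (fun s => S.T s x)
      (MeasureTheory.volume.restrict (Ioi (0:ℝ))) :=
    (contx.mono (Ioi_subset_Ici le_rfl)).aestronglyMeasurable measurableSet_Ioi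
  -- semigroup applied to the average
  have hTG : ∀ t : ℝ, 0 ≤ t → S.T t (G h) = G (t + h) - G t := by
    intro t ht
    have e1 : S.T t (G h) = ∫ s in (0:ℝ)..h, S.T t (S.T s x) :=
      ((S.T t).intervalIntegral_comp_comm (hint 0 h le_rfl hh.le)).symm
    have e2 : (∫ s in (0:ℝ)..h, S.T t (S.T s x)) = ∫ s in (0:ℝ)..h, S.T (t + s) x := by
      refine intervalIntegral.integral_congr (fun s hs => ?_)
      rw [uIcc_of_le hh.le] at hs
      rw [S.map_add t s ht hs.1]; rfl
    have e3 : (∫ s in (0:ℝ)..h, S.T (t + s) x) = ∫ u in t..(t + h), S.T u x := by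
      have := intervalIntegral.integral_comp_add_left (a := (0:ℝ)) (b := h)
        (f := fun u => S.T u x) t
      simpa using this
    have e4 : (∫ u in t..(t + h), S.T u x) = G (t + h) - G t := by
      have := intervalIntegral.integral_interval_sub_left
        (hint 0 (t + h) le_rfl (by linarith)) (hint 0 t le_rfl ht)
      rw [← this]
    rw [e1, e2, e3, e4]
  -- derivative of G at h (two-sided) and at 0 (one-sided)
  have hGh : HasDerivAt G (S.T h x) h := by
    refine intervalIntegral.integral_hasDerivAt_right (hint 0 h le_rfl hh.le)
      ⟨Ioi 0, Ioi_mem_nhds hh, haesm⟩ ?_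
    exact contx.continuousAt (Ici_mem_nhds hh)
  have hG1 : HasDerivAt (fun u : ℝ => G (u + h)) (S.T h x) 0 := by
    have hin : HasDerivAt (fun u : ℝ => u + h) (1 : ℝ) 0 := by
      simpa using (hasDerivAt_id (0:ℝ)).add_const h
    have hGh' : HasDerivAt G (S.T h x) ((fun u : ℝ => u + h) 0) := by
      simpa using hGh
    have := HasDerivAt.scomp (𝕜 := ℝ) (𝕜' := ℝ) 0 hGh' hin
    simpa [Function.comp_def] using this
  have hG0 : HasDerivWithinAt G x (Ici 0) 0 := by
    have : HasDerivWithinAt G (S.T 0 x) (Ici 0) 0 := by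
      refine intervalIntegral.integral_hasDerivWithinAt_right (hint 0 0 le_rfl le_rfl)
        ⟨Ioi 0, self_mem_nhdsWithin, haesm⟩ ?_
      exact (contx 0 self_mem_Ici).mono (Ioi_subset_Ici le_rfl)
    simpa [S.map_zero] using this
  have hF : HasDerivWithinAt (fun t => G (t + h) - G t) (S.T h x - x) (Ici 0) 0 :=
    (hG1.hasDerivWithinAt).sub hG0
  have hder : HasDerivWithinAt (fun t => S.T t (G h)) (S.T h x - x) (Ici 0) 0 := by
    refine hF.congr (fun t htt => (hTG t htt)) ?_
    exact hTG 0 le_rfl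
  have hmem : G h ∈ S.dom := S.dom_maximal _ _ hder
  refine ⟨h⁻¹ • G h, Submodule.smul_mem _ _ hmem, ?_⟩
  have hsub : G h - h • x = ∫ s in (0:ℝ)..h, (S.T s x - x) := by
    rw [intervalIntegral.integral_sub (hint 0 h le_rfl hh.le) intervalIntegrable_const,
      intervalIntegral.integral_const]
    simp
    rfl
  have hbd : ‖G h - h • x‖ ≤ (ε/2) * |h - 0| := by
    rw [hsub]
    refine intervalIntegral.norm_integral_le_of_norm_le_const (fun s hs => ?_)
    rw [uIoc_of_le hh.le] at hs
    have h1 : s ∈ Ici (0:ℝ) := le_of_lt hs.1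
    have h2 : dist s 0 < δ := by
      rw [Real.dist_eq, sub_zero, abs_of_pos hs.1]
      calc s ≤ h := hs.2
        _ < δ := by rw [hhdef]; linarith
    have := hδ h1 h2
    rw [dist_eq_norm] at this
    exact this.le
  have hx : x - h⁻¹ • G h = h⁻¹ • (h • x - G h) := by
    rw [smul_sub, smul_smul, inv_mul_cancel₀ hh.ne', one_smul]
  rw [hx]
  rw [norm_smul, norm_sub_rev]
  have : |h - 0| = h := by rw [sub_zero, abs_of_pos hh]
  rw [this] at hbd
  calc ‖(h:ℝ)⁻¹‖ * ‖G h - h • x‖ ≤ h⁻¹ * ((ε/2) * h) := by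
        refine mul_le_mul ?_ hbd (norm_nonneg _) (by positivity)
        rw [Real.norm_eq_abs, abs_of_pos (by positivity)]
    _ = ε/2 := by field_simp
    _ < ε := by linarith


lemma cont_aux (Sn : C0Semigroup X M ω) {t : ℝ} (ht : 0 ≤ t) {V : ℝ → X}
    (hV : ContinuousOn V (Icc 0 t)) :
    ContinuousOn (fun s => Sn.T (t - s) (V s)) (Icc 0 t) := by
  intro s₀ hs₀
  have hσ : Filter.Tendsto (fun s : ℝ => t - s) (nhdsWithin s₀ (Icc 0 t)) (nhds (t - s₀)) :=
    (tendsto_const_nhds.sub tendsto_id).mono_left nhdsWithin_le_nhds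
  have hσ0 : ∀ᶠ s in nhdsWithin s₀ (Icc 0 t), 0 ≤ t - s := by
    filter_upwards [self_mem_nhdsWithin] with s hs
    linarith [hs.2]
  exact master Sn hσ hσ0 (by linarith [hs₀.2]) (hV s₀ hs₀)

lemma key_identity [CompleteSpace X] (Sn S' : C0Semigroup X M ω) {lam : ℝ} (hlam0 : 0 < lam)
    {Rn R' : X →L[ℝ] X} (hRn : IsResolvent Sn lam Rn) (hR' : IsResolvent S' lam R')
    (y : X) {t : ℝ} (ht : 0 ≤ t) :
    Rn (S'.T t (R' y)) - Sn.T t (Rn (R' y)) =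
      lam⁻¹ • ∫ s in (0:ℝ)..t, Sn.T (t - s) (R' (S'.T s y) - Rn (S'.T s y)) := by
  obtain ⟨hz, hzeq⟩ := hR'.2 y
  set gz : X := S'.gen ⟨R' y, hz⟩ with hgz
  have hlamgz : lam • gz = R' y - y := by
    rw [hgz, eq_sub_iff_add_eq, ← eq_sub_iff_add_eq']
    exact hzeq.symm
  set u : ℝ → X := fun s => Sn.T (t - s) (Rn (S'.T s (R' y))) with hu
  set V : ℝ → X := fun s => R' (S'.T s y) - Rn (S'.T s y) with hV
  have hy_cont : ContinuousOn (fun s => S'.T s y) (Icc 0 t) :=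
    (S'.strong_cont y).mono (Icc_subset_Ici_self)
  have hz_cont : ContinuousOn (fun s => S'.T s (R' y)) (Icc 0 t) :=
    (S'.strong_cont (R' y)).mono (Icc_subset_Ici_self)
  have hV_cont : ContinuousOn V (Icc 0 t) :=
    (R'.continuous.comp_continuousOn hy_cont).sub (Rn.continuous.comp_continuousOn hy_cont)
  have hu_cont : ContinuousOn u (Icc 0 t) :=
    cont_aux Sn ht (Rn.continuous.comp_continuousOn hz_cont)
  have hF_cont : ContinuousOn (fun s => Sn.T (t - s) (V s)) (Icc 0 t) :=
    cont_aux Sn ht hV_cont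
  have hderiv : ∀ s ∈ Ioo (0:ℝ) t, HasDerivAt u (lam⁻¹ • Sn.T (t - s) (V s)) s := by
    intro s hs
    have hw : HasDerivAt (fun s => Rn (S'.T s (R' y))) (Rn (S'.T s gz)) s :=
      Rn.hasFDerivAt.comp_hasDerivAt s (hasDerivAt_T S' ⟨R' y, hz⟩ hs.1)
    obtain ⟨hm, hmeq⟩ := hRn.2 (S'.T s (R' y))
    have hgval : Sn.gen ⟨Rn (S'.T s (R' y)), hm⟩ =
        lam⁻¹ • (Rn (S'.T s (R' y)) - S'.T s (R' y)) := by
      have h1 : lam • Sn.gen ⟨Rn (S'.T s (R' y)), hm⟩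
          = Rn (S'.T s (R' y)) - S'.T s (R' y) := by
        rw [eq_sub_iff_add_eq, ← eq_sub_iff_add_eq']
        exact hmeq.symm
      rw [← h1, smul_smul, inv_mul_cancel₀ hlam0.ne', one_smul]
    have hda := hasDerivAt_T_comp Sn hs.1 hs.2 hw hm hgval
    have halg : Rn (S'.T s gz) - lam⁻¹ • (Rn (S'.T s (R' y)) - S'.T s (R' y))
        = lam⁻¹ • V s := by
      have h2 : Rn (S'.T s gz) = lam⁻¹ • (Rn (S'.T s (R' y)) - Rn (S'.T s y)) := by
        have : lam • Rn (S'.T s gz) = Rn (S'.T s (R' y)) - Rn (S'.T s y) := by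
          rw [← map_sub, ← map_sub, ← hlamgz, map_smul, map_smul]
        rw [← this, smul_smul, inv_mul_cancel₀ hlam0.ne', one_smul]
      have h3 : S'.T s (R' y) = R' (S'.T s y) := (res_comm hR' y hs.1.le).symm
      rw [h2, hV, ← smul_sub]
      congr 1
      rw [h3]
      abel
    have : Sn.T (t - s) (Rn (S'.T s gz)) -
        Sn.T (t - s) (lam⁻¹ • (Rn (S'.T s (R' y)) - S'.T s (R' y)))
        = lam⁻¹ • Sn.T (t - s) (V s) := by
      rw [← map_sub, halg, map_smul]
    rwa [this] at hda
  have hint : IntervalIntegrable (fun s => lam⁻¹ • Sn.T (t - s) (V s))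
      MeasureTheory.volume 0 t := by
    refine ContinuousOn.intervalIntegrable ?_
    rw [uIcc_of_le ht]
    exact hF_cont.const_smul _
  have hftc := intervalIntegral.integral_eq_sub_of_hasDeriv_right_of_le ht hu_cont
    (fun s hs => (hderiv s hs).hasDerivWithinAt) hint
  have hut : u t = Rn (S'.T t (R' y)) := by
    rw [hu]; simp only [sub_self, Sn.map_zero]; rfl
  have hu0 : u 0 = Sn.T t (Rn (R' y)) := by
    rw [hu]; simp only [sub_zero, S'.map_zero]; rfl
  rw [hut, hu0] at hftc
  rw [← hftc, intervalIntegral.integral_smul]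

end TK


/-- Trotter–Kato approximation theorem: if the semigroups `T_N(t)`, `T(t)` all
satisfy `‖T_N(t)‖, ‖T(t)‖ ≤ M e^{ωt}` and the resolvents converge strongly,
`(I - λL_N)⁻¹x → (I - λL)⁻¹x` for some `λ > ω`, then `T_N(t)x → T(t)x` for every
`x`, uniformly on bounded intervals of `t`. -/
theorem stmt16 {X : Type*} [NormedAddCommGroup X] [NormedSpace ℝ X]
    [CompleteSpace X] (M ω : ℝ)
    (S : ℕ → C0Semigroup X M ω) (S' : C0Semigroup X M ω)
    (lam : ℝ) (hlam : ω < lam) (hlam0 : 0 < lam)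
    (R : ℕ → X →L[ℝ] X) (R' : X →L[ℝ] X)
    (hR : ∀ N, IsResolvent (S N) lam (R N)) (hR' : IsResolvent S' lam R')
    (hcons : ∀ x : X, Filter.Tendsto (fun N => R N x) Filter.atTop (nhds (R' x))) :
    ∀ (x : X) (b : ℝ),
      TendstoUniformlyOn (fun N t => (S N).T t x) (fun t => S'.T t x)
        Filter.atTop (Icc 0 b) := by
  intro x b
  rcases lt_or_ge b 0 with hb | hb
  · rw [Icc_eq_empty (by linarith)]
    exact tendstoUniformlyOn_empty
  -- setup: uniform bound on the operator norms on [0, b]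
  set C : ℝ := M * Real.exp (|ω| * b) with hCdef
  have hC0 : 0 ≤ C := mul_nonneg (TK.M_nonneg S') (Real.exp_nonneg _)
  have hTbd : ∀ (W : C0Semigroup X M ω), ∀ t ∈ Icc (0:ℝ) b, ‖W.T t‖ ≤ C := by
    intro W t ht
    refine (W.growth t ht.1).trans ?_
    refine mul_le_mul_of_nonneg_left (Real.exp_le_exp.2 ?_) (TK.M_nonneg W)
    calc ω * t ≤ |ω| * t := mul_le_mul_of_nonneg_right (le_abs_self ω) ht.1
      _ ≤ |ω| * b := mul_le_mul_of_nonneg_left ht.2 (abs_nonneg ω)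
  rw [Metric.tendstoUniformlyOn_iff]
  intro ε hε
  -- choose a good approximation x'' = R' z, z = R' y₂, z ∈ dom
  set δ : ℝ := ε / 4 / (C + 1) with hδdef
  have hδ0 : 0 < δ := by positivity
  obtain ⟨d₁, hd₁mem, hd₁⟩ := TK.dom_dense S' x (show 0 < δ/2 by positivity)
  set y₁ : X := d₁ - lam • S'.gen ⟨d₁, hd₁mem⟩ with hy₁
  have hRy₁ : R' y₁ = d₁ := hR'.1 ⟨d₁, hd₁mem⟩
  obtain ⟨z, hzmem, hz⟩ := TK.dom_dense S' y₁
    (show 0 < δ/2 / (‖R'‖ + 1) by positivity)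
  set y₂ : X := z - lam • S'.gen ⟨z, hzmem⟩ with hy₂
  have hRy₂ : R' y₂ = z := hR'.1 ⟨z, hzmem⟩
  set x'' : X := R' z with hx''
  have hxx : ‖x - x''‖ < δ := by
    have h1 : ‖d₁ - x''‖ ≤ (‖R'‖ + 1) * ‖y₁ - z‖ := by
      rw [hx'', ← hRy₁, ← map_sub]
      refine (R'.le_opNorm _).trans ?_
      exact mul_le_mul_of_nonneg_right (by linarith [norm_nonneg R']) (norm_nonneg _)
    have h2 : (‖R'‖ + 1) * ‖y₁ - z‖ < δ/2 := by
      have hpos : (0:ℝ) < ‖R'‖ + 1 := by positivity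
      have := (mul_lt_mul_iff_right₀ hpos).2 hz
      calc (‖R'‖ + 1) * ‖y₁ - z‖ < (‖R'‖ + 1) * (δ/2 / (‖R'‖ + 1)) := this
        _ = δ/2 := by field_simp
    calc ‖x - x''‖ ≤ ‖x - d₁‖ + ‖d₁ - x''‖ := by
          have := norm_add_le (x - d₁) (d₁ - x'')
          simpa using this
      _ < δ/2 + δ/2 := add_lt_add_of_lt_of_le hd₁ (h1.trans h2.le)
      _ = δ := by ring
  -- the quantitative middle-term threshold
  set D : ℝ := C + lam⁻¹ * C * b + 1 with hDdef
  have hD0 : 0 < D := by positivity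
  set ε₁ : ℝ := ε / 4 / D with hε₁def
  have hε₁0 : 0 < ε₁ := by positivity
  -- the compact sets
  have hKycpt : IsCompact ((fun s => S'.T s y₂) '' Icc 0 b) :=
    isCompact_Icc.image_of_continuousOn ((S'.strong_cont y₂).mono Icc_subset_Ici_self)
  have hKzcpt : IsCompact ((fun s => S'.T s z) '' Icc 0 b) :=
    isCompact_Icc.image_of_continuousOn ((S'.strong_cont z).mono Icc_subset_Ici_self)
  have E1 : ∀ᶠ N in Filter.atTop, ‖R N z - R' z‖ < ε₁ := by
    have := (hcons z).eventually (Metric.ball_mem_nhds (R' z) hε₁0)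
    filter_upwards [this] with N hN
    rwa [dist_eq_norm] at hN
  have E2 := TK.unif_on_compact hcons hKycpt hε₁0
  have E3 := TK.unif_on_compact hcons hKzcpt hε₁0
  filter_upwards [E1, E2, E3] with N h1 h2 h3
  intro t htmem
  have ht0 : 0 ≤ t := htmem.1
  rw [dist_eq_norm]
  -- the three-term decomposition
  have hdec : S'.T t x - (S N).T t x
      = S'.T t (x - x'') + (S'.T t x'' - (S N).T t x'') + (S N).T t (x'' - x) := by
    rw [map_sub, map_sub]
    abel
  -- outer terms
  have houter1 : ‖S'.T t (x - x'')‖ ≤ ε / 4 := by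
    refine ((S'.T t).le_opNorm _).trans ?_
    calc ‖S'.T t‖ * ‖x - x''‖ ≤ C * δ :=
          mul_le_mul (hTbd S' t htmem) hxx.le (norm_nonneg _) hC0
      _ ≤ (C + 1) * δ := by nlinarith
      _ = ε / 4 := by rw [hδdef]; field_simp
  have houter2 : ‖(S N).T t (x'' - x)‖ ≤ ε / 4 := by
    refine (((S N).T t).le_opNorm _).trans ?_
    rw [norm_sub_rev]
    calc ‖(S N).T t‖ * ‖x - x''‖ ≤ C * δ :=
          mul_le_mul (hTbd (S N) t htmem) hxx.le (norm_nonneg _) hC0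
      _ ≤ (C + 1) * δ := by nlinarith
      _ = ε / 4 := by rw [hδdef]; field_simp
  -- middle term
  have hmid : ‖S'.T t x'' - (S N).T t x''‖ < ε / 4 := by
    have hcomm : S'.T t x'' = R' (S'.T t z) := by
      rw [hx'']
      exact (TK.res_comm hR' z ht0).symm
    have hdec2 : S'.T t x'' - (S N).T t x''
        = (R' (S'.T t z) - R N (S'.T t z)) + (R N (S'.T t z) - (S N).T t (R N z))
          + (S N).T t (R N z - R' z) := by
      rw [hcomm, hx'', map_sub]
      abel
    -- term 1 : < ε₁
    have hterm1 : ‖R' (S'.T t z) - R N (S'.T t z)‖ < ε₁ := by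
      rw [norm_sub_rev]
      exact h3 _ (mem_image_of_mem _ htmem)
    -- term 3 : ≤ C * ε₁
    have hterm3 : ‖(S N).T t (R N z - R' z)‖ ≤ C * ε₁ := by
      refine (((S N).T t).le_opNorm _).trans ?_
      exact mul_le_mul (hTbd (S N) t htmem) h1.le (norm_nonneg _) hC0
    -- term 2 : the key identity
    have hterm2 : ‖R N (S'.T t z) - (S N).T t (R N z)‖ ≤ lam⁻¹ * C * b * ε₁ := by
      have hkey := TK.key_identity (S N) S' hlam0 (hR N) hR' y₂ ht0
      rw [hRy₂] at hkey
      rw [hkey, norm_smul]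
      have hbd : ‖∫ s in (0:ℝ)..t, (S N).T (t - s)
          (R' (S'.T s y₂) - R N (S'.T s y₂))‖ ≤ (C * ε₁) * |t - 0| := by
        refine intervalIntegral.norm_integral_le_of_norm_le_const (fun s hs => ?_)
        rw [uIoc_of_le ht0] at hs
        have hsmem : s ∈ Icc (0:ℝ) b := ⟨hs.1.le, hs.2.trans htmem.2⟩
        have htsmem : t - s ∈ Icc (0:ℝ) b := ⟨by linarith [hs.2], by linarith [hs.1, htmem.2]⟩
        refine (((S N).T (t - s)).le_opNorm _).trans ?_
        have hin : ‖R' (S'.T s y₂) - R N (S'.T s y₂)‖ ≤ ε₁ := by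
          rw [norm_sub_rev]
          exact (h2 _ (mem_image_of_mem _ hsmem)).le
        exact mul_le_mul (hTbd (S N) _ htsmem) hin (norm_nonneg _) hC0
      have habs : |t - 0| ≤ b := by rw [sub_zero, abs_of_nonneg ht0]; exact htmem.2
      have hlaminv : (0:ℝ) < lam⁻¹ := by positivity
      calc ‖lam⁻¹‖ * ‖∫ s in (0:ℝ)..t, (S N).T (t - s)
            (R' (S'.T s y₂) - R N (S'.T s y₂))‖
          ≤ lam⁻¹ * ((C * ε₁) * |t - 0|) := by
            rw [Real.norm_eq_abs, abs_of_pos hlaminv]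
            exact mul_le_mul_of_nonneg_left hbd hlaminv.le
        _ ≤ lam⁻¹ * ((C * ε₁) * b) := by
            refine mul_le_mul_of_nonneg_left ?_ hlaminv.le
            exact mul_le_mul_of_nonneg_left habs (by positivity)
        _ = lam⁻¹ * C * b * ε₁ := by ring
    calc ‖S'.T t x'' - (S N).T t x''‖
        ≤ ‖R' (S'.T t z) - R N (S'.T t z)‖ + ‖R N (S'.T t z) - (S N).T t (R N z)‖
          + ‖(S N).T t (R N z - R' z)‖ := by
          rw [hdec2]
          exact norm_add₃_le
      _ < ε₁ + lam⁻¹ * C * b * ε₁ + C * ε₁ :=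
          add_lt_add_of_lt_of_le (add_lt_add_of_lt_of_le hterm1 hterm2) hterm3
      _ = D * ε₁ := by rw [hDdef]; ring
      _ = ε / 4 := by rw [hε₁def]; field_simp
  calc ‖S'.T t x - (S N).T t x‖
      ≤ ‖S'.T t (x - x'')‖ + ‖S'.T t x'' - (S N).T t x''‖ + ‖(S N).T t (x'' - x)‖ := by
        rw [hdec]
        exact norm_add₃_le
    _ < ε / 4 + ε / 4 + ε / 4 :=
        add_lt_add_of_lt_of_le (add_lt_add_of_le_of_lt houter1 hmid) houter2
    _ < ε := by linarith
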